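/- Let p̂ and p̂' be i.i.d. real random variables with values in [0,1], both with mean p and variance at most ρ². Let r be uniform on [0,1], independent of p̂ and p̂'. Then the probability that r lies strictly between p̂ and p̂' is at most ρ. -/

import Mathlib

open MeasureTheory

/-- Random-threshold replicability: if `p̂, p̂'` are i.i.d. with values in `[0,1]` and
variance at most `ρ²/2`, and `r` is uniform on `[0,1]` independent of both, then the
probability that `r` lies strictly between `p̂` and `p̂'` is at most `ρ`. -/
theorem random_threshold_replicable
    (μ : Measure ℝ) [IsProbabilityMeasure μ] (ρ : ℝ) (hρ : 0 ≤ ρ)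
    (hsupp : ∀ᵐ x ∂μ, x ∈ Set.Icc (0:ℝ) 1)
    (hvar : (∫ x, x^2 ∂μ) - (∫ x, x ∂μ)^2 ≤ ρ^2 / 2) :
    (μ.prod (μ.prod (volume.restrict (Set.Icc (0:ℝ) 1))))
      {z : ℝ × ℝ × ℝ | z.2.2 ∈ Set.Ioo (min z.1 z.2.1) (max z.1 z.2.1)}
      ≤ ENNReal.ofReal ρ := by
  set ν := volume.restrict (Set.Icc (0:ℝ) 1) with hν
  set π := μ.prod μ with hπ
  have hS : MeasurableSet {z : ℝ × ℝ × ℝ |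
      z.2.2 ∈ Set.Ioo (min z.1 z.2.1) (max z.1 z.2.1)} := by
    exact (measurableSet_lt (f := fun z : ℝ × ℝ × ℝ => min z.1 z.2.1) (g := fun z => z.2.2)
      (by fun_prop) (by fun_prop)).inter
      (measurableSet_lt (f := fun z : ℝ × ℝ × ℝ => z.2.2) (g := fun z => max z.1 z.2.1)
      (by fun_prop) (by fun_prop))
  -- a.e. statements on the product measure
  have haefst : ∀ᵐ z ∂π, z.1 ∈ Set.Icc (0:ℝ) 1 := by
    rw [Filter.eventually_iff, mem_ae_iff]
    have heq : {z : ℝ × ℝ | z.1 ∈ Set.Icc (0:ℝ) 1}ᶜ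
        = (Set.Icc (0:ℝ) 1)ᶜ ×ˢ (Set.univ : Set ℝ) := by
      ext z; simp
    have h0 : μ (Set.Icc (0:ℝ) 1)ᶜ = 0 := by
      have h := hsupp; rw [Filter.eventually_iff, mem_ae_iff] at h; exact h
    rw [heq, hπ, Measure.prod_prod, h0, zero_mul]
  have haesnd : ∀ᵐ z ∂π, z.2 ∈ Set.Icc (0:ℝ) 1 := by
    rw [Filter.eventually_iff, mem_ae_iff]
    have heq : {z : ℝ × ℝ | z.2 ∈ Set.Icc (0:ℝ) 1}ᶜ
        = (Set.univ : Set ℝ) ×ˢ (Set.Icc (0:ℝ) 1)ᶜ := by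
      ext z; simp
    have h0 : μ (Set.Icc (0:ℝ) 1)ᶜ = 0 := by
      have h := hsupp; rw [Filter.eventually_iff, mem_ae_iff] at h; exact h
    rw [heq, hπ, Measure.prod_prod, h0, mul_zero]
  have hae : ∀ᵐ z ∂π, z.1 ∈ Set.Icc (0:ℝ) 1 ∧ z.2 ∈ Set.Icc (0:ℝ) 1 :=
    haefst.and haesnd
  -- integrability helpers
  have key_bound : ∀ᵐ z ∂π, |z.1 - z.2| ≤ 1 := by
    filter_upwards [hae] with z hz
    rcases hz with ⟨⟨h1, h2⟩, ⟨h3, h4⟩⟩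
    rw [abs_sub_le_iff]; constructor <;> linarith
  have hint_sq : Integrable (fun z : ℝ × ℝ => (z.1 - z.2)^2) π := by
    refine Integrable.mono' (integrable_const (1:ℝ))
      ((measurable_fst.sub measurable_snd).pow_const 2).aestronglyMeasurable ?_
    filter_upwards [key_bound] with z hz
    have h : |z.1 - z.2|^2 ≤ 1^2 := pow_le_pow_left₀ (abs_nonneg _) hz 2
    rw [Real.norm_eq_abs, abs_of_nonneg (sq_nonneg (z.1 - z.2))]
    rw [sq_abs] at h; linarith
  have hint1 : Integrable (fun z : ℝ × ℝ => z.1^2) π := by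
    refine Integrable.mono' (integrable_const (1:ℝ))
      (measurable_fst.pow_const 2).aestronglyMeasurable ?_
    filter_upwards [haefst] with z ⟨h1, h2⟩
    rw [Real.norm_eq_abs, abs_of_nonneg (sq_nonneg _)]; nlinarith
  have hint2 : Integrable (fun z : ℝ × ℝ => z.2^2) π := by
    refine Integrable.mono' (integrable_const (1:ℝ))
      (measurable_snd.pow_const 2).aestronglyMeasurable ?_
    filter_upwards [haesnd] with z ⟨h1, h2⟩
    rw [Real.norm_eq_abs, abs_of_nonneg (sq_nonneg _)]; nlinarith
  have hint3 : Integrable (fun z : ℝ × ℝ => z.1 * z.2) π := by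
    refine Integrable.mono' (integrable_const (1:ℝ))
      (measurable_fst.mul measurable_snd).aestronglyMeasurable ?_
    filter_upwards [hae] with z ⟨⟨h1, h2⟩, ⟨h3, h4⟩⟩
    rw [Real.norm_eq_abs, abs_mul]
    calc |z.1| * |z.2| ≤ 1 * 1 := by
          apply mul_le_mul _ _ (abs_nonneg _) zero_le_one <;> rw [abs_le] <;>
            constructor <;> linarith
      _ = 1 := by ring
  have hx_int : Integrable (fun x : ℝ => x) μ := by
    refine Integrable.mono' (integrable_const (1:ℝ))
      measurable_id.aestronglyMeasurable ?_
    filter_upwards [hsupp] with x ⟨h1, h2⟩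
    rw [Real.norm_eq_abs, abs_le]; constructor <;> linarith
  have hx2_int : Integrable (fun x : ℝ => x^2) μ := by
    refine Integrable.mono' (integrable_const (1:ℝ))
      (measurable_id.pow_const 2).aestronglyMeasurable ?_
    filter_upwards [hsupp] with x ⟨h1, h2⟩
    rw [Real.norm_eq_abs, abs_of_nonneg (sq_nonneg _)]; nlinarith
  -- Step 1: express the measure as a double lintegral of |x - y|
  have step1 : (μ.prod (μ.prod ν))
      {z : ℝ × ℝ × ℝ | z.2.2 ∈ Set.Ioo (min z.1 z.2.1) (max z.1 z.2.1)}
      = ∫⁻ z, ENNReal.ofReal |z.1 - z.2| ∂π := by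
    rw [Measure.prod_apply hS]
    have inner : ∀ x : ℝ, (μ.prod ν) (Prod.mk x ⁻¹'
        {z : ℝ × ℝ × ℝ | z.2.2 ∈ Set.Ioo (min z.1 z.2.1) (max z.1 z.2.1)})
        = ∫⁻ y, ν (Set.Ioo (min x y) (max x y)) ∂μ := by
      intro x
      rw [Measure.prod_apply (measurable_prodMk_left hS)]
      rfl
    simp only [inner]
    rw [hπ, lintegral_prod _ (by fun_prop)]
    apply lintegral_congr_ae
    filter_upwards [hsupp] with x ⟨hx1, hx2⟩
    apply lintegral_congr_ae
    filter_upwards [hsupp] with y ⟨hy1, hy2⟩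
    have hsub : Set.Ioo (min x y) (max x y) ⊆ Set.Icc (0:ℝ) 1 := by
      intro t ht
      exact ⟨le_trans (le_min hx1 hy1) ht.1.le, le_trans ht.2.le (max_le hx2 hy2)⟩
    rw [hν, Measure.restrict_apply measurableSet_Ioo,
      Set.inter_eq_self_of_subset_left hsub,
      Real.volume_Ioo, max_sub_min_eq_abs, abs_sub_comm]
  rw [step1]
  -- Step 2: Cauchy-Schwarz
  have CS := ENNReal.lintegral_mul_le_Lp_mul_Lq π
    Real.HolderConjugate.two_two
    (f := fun z : ℝ × ℝ => ENNReal.ofReal |z.1 - z.2|) (g := fun _ => 1)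
    (by fun_prop) aemeasurable_const
  simp only [mul_one, ENNReal.one_rpow, lintegral_one, measure_univ,
    ENNReal.one_rpow] at CS
  have hsqval : ∫⁻ z, (ENNReal.ofReal |z.1 - z.2|) ^ (2:ℝ) ∂π
      ≤ ENNReal.ofReal (ρ^2) := by
    have heq : ∀ z : ℝ × ℝ, (ENNReal.ofReal |z.1 - z.2|) ^ (2:ℝ)
        = ENNReal.ofReal ((z.1 - z.2)^2) := by
      intro z
      rw [ENNReal.ofReal_rpow_of_nonneg (abs_nonneg _) (by norm_num)]
      congr 1
      rw [show (2:ℝ) = ((2:ℕ):ℝ) by norm_num, Real.rpow_natCast, sq_abs]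
    simp only [heq]
    rw [← ofReal_integral_eq_lintegral_ofReal hint_sq
      (Filter.Eventually.of_forall fun z => sq_nonneg _)]
    apply ENNReal.ofReal_le_ofReal
    -- compute the integral
    have expand : (fun z : ℝ × ℝ => (z.1 - z.2)^2)
        = fun z => z.1^2 + z.2^2 - 2 * (z.1 * z.2) := by
      funext z; ring
    have hadd : Integrable (fun z : ℝ × ℝ => z.1^2 + z.2^2) π := hint1.add hint2
    have hmul : Integrable (fun z : ℝ × ℝ => 2 * (z.1 * z.2)) π :=
      hint3.const_mul 2
    rw [expand, integral_sub hadd hmul, integral_add hint1 hint2,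
      integral_const_mul]
    have e1 : ∫ z : ℝ × ℝ, z.1^2 ∂π = ∫ x, x^2 ∂μ := by
      rw [hπ, integral_prod _ hint1]
      simp
    have e2 : ∫ z : ℝ × ℝ, z.2^2 ∂π = ∫ x, x^2 ∂μ := by
      rw [hπ, integral_prod _ hint2]
      simp
    have e3 : ∫ z : ℝ × ℝ, z.1 * z.2 ∂π = (∫ x, x ∂μ)^2 := by
      rw [hπ, integral_prod _ hint3]
      have hx : ∀ x : ℝ, ∫ y, x * y ∂μ = x * ∫ y, y ∂μ := fun x =>
        integral_const_mul x _
      simp only [hx]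
      rw [integral_mul_const, sq]
    rw [e1, e2, e3]
    linarith
  calc ∫⁻ z, ENNReal.ofReal |z.1 - z.2| ∂π
      ≤ (∫⁻ z, (ENNReal.ofReal |z.1 - z.2|) ^ (2:ℝ) ∂π) ^ (1/(2:ℝ)) := by
        simpa using CS
    _ ≤ (ENNReal.ofReal (ρ^2)) ^ (1/(2:ℝ)) := by
        exact ENNReal.rpow_le_rpow hsqval (by norm_num)
    _ = ENNReal.ofReal ρ := by
        have h2 : ENNReal.ofReal (ρ^2) = ENNReal.ofReal ρ ^ (2:ℝ) := by
          rw [show (ρ^2 : ℝ) = ρ ^ ((2:ℕ):ℝ) by rw [Real.rpow_natCast],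
            ← ENNReal.ofReal_rpow_of_nonneg hρ (by norm_num)]
          norm_num
        rw [h2, ← ENNReal.rpow_mul]
        norm_num
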